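/- Let m : [0,∞) → ℝ be a weakly increasing function with m(y)/log(y) → 1 as y → ∞. Let (Y(1),Y(0)) have joint distribution P on [0,∞)² with E[|log Y(d)| | Y(d)>0] < ∞ for d=0,1. Then as a → ∞, E_P[m(aY(1)) − m(aY(0))] = (P(Y(1)>0) − P(Y(0)>0))·log(a) + o(log(a)); equivalently, E_P[m(aY(1)) − m(aY(0))] / log(a) → P(Y(1)>0) − P(Y(0)>0) as a → ∞. -/

import Mathlib

open MeasureTheory Filter Set


lemma bound_lemma (m : ℝ → ℝ) (hm_mono : MonotoneOn m (Ici 0))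
    (hm_loglike : Tendsto (fun y => m y / Real.log y) atTop (nhds 1)) :
    ∃ C : ℝ, 0 ≤ C ∧ ∀ y, 0 ≤ y → |m y| ≤ C + 2 * |Real.log y| := by
  have h1 : ∀ᶠ y in atTop, |m y / Real.log y - 1| ≤ 1 := by
    have := hm_loglike.eventually (Metric.closedBall_mem_nhds (1:ℝ) one_pos)
    simpa [Real.dist_eq] using this
  have h2 : ∀ᶠ y in atTop, 1 ≤ Real.log y := Real.tendsto_log_atTop.eventually_ge_atTop 1
  obtain ⟨y₀, hy₀⟩ := ((h1.and h2).and (eventually_ge_atTop (1:ℝ))).exists_forall_of_atTop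
  refine ⟨|m 0| + |m y₀|, by positivity, fun y hy => ?_⟩
  rcases le_or_gt y₀ y with h | h
  · obtain ⟨⟨hb, hl⟩, _⟩ := hy₀ y h
    have hlpos : 0 < Real.log y := lt_of_lt_of_le one_pos hl
    have key : |m y - Real.log y| ≤ Real.log y := by
      have h4 : m y - Real.log y = (m y / Real.log y - 1) * Real.log y := by
        field_simp
      rw [h4, abs_mul, abs_of_pos hlpos]
      nlinarith
    have key2 : |m y| ≤ 2 * Real.log y := by
      have := abs_sub_abs_le_abs_sub (m y) (Real.log y)
      have h3 : |Real.log y| = Real.log y := abs_of_pos hlpos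
      nlinarith [abs_nonneg (m y)]
    nlinarith [le_abs_self (Real.log y), abs_nonneg (m 0), abs_nonneg (m y₀)]
  · obtain ⟨⟨_, _⟩, h1'⟩ := hy₀ y₀ le_rfl
    have hmy : m 0 ≤ m y := hm_mono (mem_Ici.2 le_rfl) hy hy
    have hmy' : m y ≤ m y₀ := hm_mono hy (mem_Ici.2 (le_trans zero_le_one h1')) h.le
    have hb : |m y| ≤ |m 0| + |m y₀| := abs_le.2 ⟨by nlinarith [neg_abs_le (m 0), abs_nonneg (m y₀)], by nlinarith [le_abs_self (m y₀), abs_nonneg (m 0)]⟩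
    nlinarith [abs_nonneg (Real.log y)]


lemma ptlim (m : ℝ → ℝ)
    (hm_loglike : Tendsto (fun y => m y / Real.log y) atTop (nhds 1))
    {y : ℝ} (hy : 0 < y) :
    Tendsto (fun a : ℝ => m (a * y) / Real.log a) atTop (nhds 1) := by
  have hmul : Tendsto (fun a : ℝ => a * y) atTop atTop := tendsto_id.atTop_mul_const hy
  have h1 : Tendsto (fun a : ℝ => m (a * y) / Real.log (a * y)) atTop (nhds 1) :=
    hm_loglike.comp hmul
  have h2 : Tendsto (fun a : ℝ => Real.log (a * y) / Real.log a) atTop (nhds 1) := by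
    have hlim : Tendsto (fun a : ℝ => 1 + Real.log y * (Real.log a)⁻¹) atTop (nhds 1) := by
      have : Tendsto (fun a : ℝ => (Real.log a)⁻¹) atTop (nhds 0) :=
        tendsto_inv_atTop_zero.comp Real.tendsto_log_atTop
      simpa using tendsto_const_nhds.add (tendsto_const_nhds.mul this)
    refine hlim.congr' ?_
    filter_upwards [eventually_gt_atTop (1:ℝ)] with a ha
    have hla : (0:ℝ) < Real.log a := Real.log_pos ha
    rw [Real.log_mul (by linarith : a ≠ 0) hy.ne']
    field_simp
  have := h1.mul h2
  rw [mul_one] at this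
  refine this.congr' ?_
  filter_upwards [hmul.eventually_gt_atTop 1] with a ha
  have hL : Real.log (a * y) ≠ 0 := (Real.log_pos ha).ne'
  field_simp

lemma key_lemma {Ω : Type*} [MeasurableSpace Ω] (μ : Measure Ω) [IsProbabilityMeasure μ]
    (Y : Ω → ℝ) (hYmeas : Measurable Y) (hYnn : ∀ ω, 0 ≤ Y ω)
    (m : ℝ → ℝ) (hm_mono : MonotoneOn m (Ici 0))
    (hm_loglike : Tendsto (fun y => m y / Real.log y) atTop (nhds 1))
    (hint : IntegrableOn (fun ω => Real.log (Y ω)) {ω | 0 < Y ω} μ) :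
    (∀ᶠ a in atTop, Integrable (fun ω => m (a * Y ω)) μ) ∧
    Tendsto (fun a => (∫ ω, m (a * Y ω) ∂μ) / Real.log a) atTop
      (nhds (μ {ω | 0 < Y ω}).toReal) := by
  obtain ⟨C, hC0, hC⟩ := bound_lemma m hm_mono hm_loglike
  set s : Set Ω := {ω | 0 < Y ω} with hs_def
  have hs : MeasurableSet s := measurableSet_lt measurable_const hYmeas
  have hYzero : ∀ ω ∈ sᶜ, Y ω = 0 := fun ω hω => le_antisymm (not_lt.1 hω) (hYnn ω)
  -- global integrability of log Y
  have hlog : Integrable (fun ω => Real.log (Y ω)) μ := by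
    rw [← integrableOn_univ, ← Set.union_compl_self s]
    exact hint.union ((integrable_zero Ω ℝ μ).integrableOn.congr_fun
      (fun ω hω => by simp [hYzero ω hω]) hs.compl)
  -- measurability
  have hmeas : ∀ a : ℝ, 0 ≤ a → Measurable (fun ω => m (a * Y ω)) := by
    intro a ha
    have hmono' : Monotone (fun y => m (max y 0)) := fun x z hxz =>
      hm_mono (le_max_right x 0) (le_max_right z 0) (max_le_max hxz le_rfl)
    have : (fun ω => m (a * Y ω)) = (fun y => m (max y 0)) ∘ (fun ω => a * Y ω) := by
      funext ω
      simp [Function.comp, max_eq_left (mul_nonneg ha (hYnn ω))]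
    rw [this]
    exact hmono'.measurable.comp (measurable_const.mul hYmeas)
  -- pointwise bound
  have hbd : ∀ a : ℝ, 1 ≤ a → ∀ ω, |m (a * Y ω)| ≤ C + 2 * Real.log a + 2 * |Real.log (Y ω)| := by
    intro a ha ω
    have hla : 0 ≤ Real.log a := Real.log_nonneg ha
    rcases (hYnn ω).eq_or_lt with h | h
    · rw [← h, mul_zero]
      have := hC 0 le_rfl
      simp only [Real.log_zero, abs_zero] at this ⊢
      nlinarith [abs_nonneg (Real.log (Y ω))]
    · have h1 := hC (a * Y ω) (mul_nonneg (by linarith) (hYnn ω))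
      rw [Real.log_mul (by linarith : a ≠ 0) h.ne'] at h1
      have := abs_add_le (Real.log a) (Real.log (Y ω))
      rw [abs_of_nonneg hla] at this
      nlinarith
  -- integrability eventually
  have hInt : ∀ᶠ a in atTop, Integrable (fun ω => m (a * Y ω)) μ := by
    filter_upwards [eventually_ge_atTop (1:ℝ)] with a ha
    refine Integrable.mono' ((integrable_const (C + 2 * Real.log a)).add (hlog.norm.const_mul 2))
      ((hmeas a (by linarith)).aestronglyMeasurable) (ae_of_all _ fun ω => ?_)
    simpa [Real.norm_eq_abs, add_assoc] using hbd a ha ω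
  refine ⟨hInt, ?_⟩
  -- convergence on s
  have hconv1 : Tendsto (fun a : ℝ => ∫ ω in s, m (a * Y ω) / Real.log a ∂μ) atTop
      (nhds (μ s).toReal) := by
    have key := MeasureTheory.tendsto_integral_filter_of_dominated_convergence
      (μ := μ.restrict s) (l := atTop) (F := fun (a : ℝ) ω => m (a * Y ω) / Real.log a)
      (f := fun _ => (1:ℝ)) (bound := fun ω => (C + 2) + 2 * ‖Real.log (Y ω)‖)
      (by filter_upwards [eventually_ge_atTop (1:ℝ)] with a ha
          exact (((hmeas a (by linarith)).div_const _).aestronglyMeasurable).restrict)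
      (by filter_upwards [eventually_ge_atTop (Real.exp 1)] with a ha
          refine ae_of_all _ fun ω => ?_
          have ha1 : (1:ℝ) ≤ a := le_trans (by nlinarith [Real.exp_one_gt_d9]) ha
          have hla : 1 ≤ Real.log a := by
            rw [← Real.log_exp 1]
            exact Real.log_le_log (Real.exp_pos 1) ha
          have hb := hbd a ha1 ω
          rw [Real.norm_eq_abs, Real.norm_eq_abs, abs_div, abs_of_pos (by linarith : (0:ℝ) < Real.log a)]
          rw [div_le_iff₀ (by linarith : (0:ℝ) < Real.log a)]
          nlinarith [abs_nonneg (Real.log (Y ω)), abs_nonneg (m (a * Y ω))])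
      ((integrable_const _).add (hint.norm.const_mul 2))
      ((ae_restrict_iff' hs).2 (ae_of_all _ fun ω hω => ptlim m hm_loglike hω))
    simpa [Measure.real] using key
  -- convergence on sᶜ
  have hconv0 : Tendsto (fun a : ℝ => ∫ ω in sᶜ, m (a * Y ω) / Real.log a ∂μ) atTop
      (nhds 0) := by
    have heq : ∀ a : ℝ, ∫ ω in sᶜ, m (a * Y ω) / Real.log a ∂μ
        = (μ sᶜ).toReal * (m 0 / Real.log a) := by
      intro a
      rw [setIntegral_congr_fun hs.compl (g := fun _ => m 0 / Real.log a)
        (fun ω hω => by rw [hYzero ω hω, mul_zero]), setIntegral_const, smul_eq_mul, Measure.real]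
    simp only [heq]
    have : Tendsto (fun a : ℝ => m 0 / Real.log a) atTop (nhds 0) :=
      Tendsto.div_atTop tendsto_const_nhds Real.tendsto_log_atTop
    simpa using tendsto_const_nhds.mul this
  have := hconv1.add hconv0
  rw [add_zero] at this
  refine this.congr' ?_
  filter_upwards [hInt] with a hInta
  rw [integral_add_compl hs (hInta.div_const _), integral_div]

/-- Chen–Roth, Proposition A.2 / eqn (2): for a weakly increasing `m`
with `m(y)/log y → 1`, as `a → ∞`,
`E[m(aY(1)) - m(aY(0))] / log a → P(Y(1)>0) - P(Y(0)>0)`. -/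
theorem stmt_1
    {Ω : Type*} [MeasurableSpace Ω] (μ : Measure Ω) [IsProbabilityMeasure μ]
    (Y1 Y0 : Ω → ℝ) (hY1meas : Measurable Y1) (hY0meas : Measurable Y0)
    (hY1nonneg : ∀ ω, 0 ≤ Y1 ω) (hY0nonneg : ∀ ω, 0 ≤ Y0 ω)
    (m : ℝ → ℝ)
    (hm_mono : MonotoneOn m (Ici 0))
    (hm_loglike : Tendsto (fun y => m y / Real.log y) atTop (nhds 1))
    -- E[|log Y(d)| ∣ Y(d) > 0] < ∞ for d = 0,1
    (hint1 : IntegrableOn (fun ω => Real.log (Y1 ω)) {ω | 0 < Y1 ω} μ)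
    (hint0 : IntegrableOn (fun ω => Real.log (Y0 ω)) {ω | 0 < Y0 ω} μ) :
    Tendsto (fun a => (∫ ω, (m (a * Y1 ω) - m (a * Y0 ω)) ∂μ) / Real.log a)
      atTop (nhds ((μ {ω | 0 < Y1 ω}).toReal - (μ {ω | 0 < Y0 ω}).toReal)) := by
  obtain ⟨hI1, hT1⟩ := key_lemma μ Y1 hY1meas hY1nonneg m hm_mono hm_loglike hint1
  obtain ⟨hI0, hT0⟩ := key_lemma μ Y0 hY0meas hY0nonneg m hm_mono hm_loglike hint0
  refine (hT1.sub hT0).congr' ?_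
  filter_upwards [hI1, hI0] with a h1 h0
  rw [integral_sub h1 h0, sub_div]
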